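/- In the metric $w_N$ on the set $S = \{u_x : x \in V(\rho)\}$ induced by a complete binary tree $\rho$ of depth $d$ (with the geometric edge weights: level-$d$ edges weight 1, level-$i$ edges weight $2^{(d-1)-i}$), where $w_N(u_x, u_{x'}) = \mathrm{dist}_\rho(\tilde x, x) + \mathrm{dist}_\rho(\tilde x, x')$ for $\tilde x$ a leaf descendant of the deeper of $x, x'$, every optimal Steiner tree for the terminal set $T = \{u_x : x \text{ a leaf of } \rho\}$ has every edge incident to a terminal. -/

import Mathlib

def levelWeight (d i : ℕ) : ℕ := if i = d then 1 else 2 ^ (d - 1 - i)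

def distUp (d i j : ℕ) : ℕ := ∑ s ∈ Finset.Icc (j + 1) i, levelWeight d s

def lcaDepth : List Bool → List Bool → ℕ
  | a :: as, b :: bs => if a = b then lcaDepth as bs + 1 else 0
  | _, _ => 0

/-- The value of the metric `w_N` on two nodes `x, x'` of the complete binary tree of
depth `d` (encoded as boolean lists of length `≤ d`): `dist_ρ(x̃, x) + dist_ρ(x̃, x')`
for `x̃` a depth-`d` leaf descendant of the deeper of `x, x'`. -/
def wNnode (d : ℕ) (x x' : List Bool) : ℕ :=
  if x'.length ≤ x.length then
    distUp d d x.length + distUp d d (lcaDepth x x') + distUp d x'.length (lcaDepth x x')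
  else
    distUp d d x'.length + distUp d d (lcaDepth x x') + distUp d x.length (lcaDepth x x')

def wNmetric {V : Type*} [DecidableEq V] (d : ℕ) (φ : V → List Bool) (v v' : V) : ℕ :=
  if v = v' then 0 else wNnode d (φ v) (φ v')

noncomputable def edgeW {V : Type*} (w : V → V → ℝ) : Sym2 V → ℝ :=
  Sym2.lift ⟨fun a b => (w a b + w b a) / 2, fun a b => by ring⟩

noncomputable def treeCost {V : Type*} (w : V → V → ℝ) (E : Finset (Sym2 V)) : ℝ :=
  ∑ e ∈ E, edgeW w e

def Connects {V : Type*} (E : Finset (Sym2 V)) (T : Finset V) : Prop :=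
  ∀ u ∈ T, ∀ v ∈ T, (SimpleGraph.fromEdgeSet (E : Set (Sym2 V))).Reachable u v

def IsSteinerTree {V : Type*} (E : Finset (Sym2 V)) (T : Finset V) : Prop :=
  (∀ e ∈ E, ¬ e.IsDiag) ∧
  (SimpleGraph.fromEdgeSet (E : Set (Sym2 V))).IsAcyclic ∧ Connects E T

/- On the point set `S` with one point per node of the complete binary tree of depth
`d` (with the geometric edge weights), with terminals the depth-`d` leaves, every
optimal Steiner tree for the metric `w_N` has all of its edges incident to a
terminal. -/
section Arith

lemma lcaDepth_nil_right (x : List Bool) : lcaDepth x [] = 0 := by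
  cases x <;> rfl

lemma lcaDepth_le_right : ∀ (x y : List Bool), lcaDepth x y ≤ y.length := by
  intro x
  induction x with
  | nil => intro y; cases y <;> simp [lcaDepth]
  | cons a as ih =>
    intro y
    cases y with
    | nil => simp [lcaDepth_nil_right]
    | cons b bs =>
      simp only [lcaDepth, List.length_cons]
      split
      · exact Nat.succ_le_succ (ih bs)
      · exact Nat.zero_le _

lemma lcaDepth_comm : ∀ (x y : List Bool), lcaDepth x y = lcaDepth y x := by
  intro x
  induction x with
  | nil => intro y; cases y <;> rfl
  | cons a as ih =>
    intro y
    cases y with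
    | nil => rfl
    | cons b bs =>
      simp only [lcaDepth]
      rcases eq_or_ne a b with rfl | h
      · simp [ih bs]
      · rw [if_neg h, if_neg (Ne.symm h)]

lemma lcaDepth_self : ∀ (x : List Bool), lcaDepth x x = x.length := by
  intro x
  induction x with
  | nil => rfl
  | cons a as ih => simp [lcaDepth, ih]

lemma lcaDepth_append : ∀ (x y t : List Bool), y.length ≤ x.length →
    lcaDepth (x ++ t) y = lcaDepth x y := by
  intro x
  induction x with
  | nil =>
    intro y t h
    have : y = [] := List.eq_nil_of_length_eq_zero (Nat.le_zero.mp h)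
    subst this
    rw [lcaDepth_nil_right, lcaDepth_nil_right]
  | cons a as ih =>
    intro y t h
    cases y with
    | nil => rw [lcaDepth_nil_right, lcaDepth_nil_right]
    | cons b bs =>
      simp only [List.cons_append, lcaDepth]
      rcases eq_or_ne a b with rfl | hne
      · simp [ih bs t (by simpa using h)]
      · rw [if_neg hne, if_neg hne]

lemma levelWeight_pos (d i : ℕ) : 0 < levelWeight d i := by
  unfold levelWeight
  split
  · exact Nat.one_pos
  · exact Nat.pow_pos Nat.zero_lt_two

lemma distUp_pos {d i j : ℕ} (h : j < i) : 0 < distUp d i j := by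
  unfold distUp
  exact Finset.sum_pos (fun s _ => levelWeight_pos d s) (Finset.nonempty_Icc.mpr h)

lemma distUp_self (d i : ℕ) : distUp d i i = 0 := by
  unfold distUp
  rw [Finset.Icc_eq_empty (by omega), Finset.sum_empty]

lemma wNnode_comm (d : ℕ) (x y : List Bool) : wNnode d x y = wNnode d y x := by
  unfold wNnode
  rw [lcaDepth_comm y x]
  split_ifs with h1 h2 h2
  · have hxy : x.length = y.length := le_antisymm h2 h1
    rw [hxy]
  · ring
  · ring
  · omega

lemma wN_key (d : ℕ) (x y : List Bool) (hx : x.length < d) (hy : y.length < d)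
    (hba : y.length ≤ x.length) :
    wNnode d x y = wNnode d (x ++ List.replicate (d - x.length) false) x +
      wNnode d (x ++ List.replicate (d - x.length) false) y ∧
    0 < wNnode d (x ++ List.replicate (d - x.length) false) x ∧
    0 < wNnode d (x ++ List.replicate (d - x.length) false) y := by
  set t := List.replicate (d - x.length) false with ht
  have hlent : (x ++ t).length = d := by
    simp [ht]; omega
  have h1 : lcaDepth (x ++ t) x = x.length := by
    rw [lcaDepth_append x x t le_rfl, lcaDepth_self]
  have h2 : lcaDepth (x ++ t) y = lcaDepth x y := lcaDepth_append x y t hba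
  have hl : lcaDepth x y ≤ y.length := lcaDepth_le_right x y
  unfold wNnode
  rw [if_pos hba, if_pos (by omega : x.length ≤ (x ++ t).length),
    if_pos (by omega : y.length ≤ (x ++ t).length), hlent, h1, h2,
    distUp_self, distUp_self]
  have p1 : 0 < distUp d d x.length := distUp_pos hx
  have p2 : 0 < distUp d d (lcaDepth x y) := distUp_pos (by omega)
  refine ⟨by ring, by omega, by omega⟩

end Arith
section Graph

open SimpleGraph

variable {V : Type*}

lemma walk_or {G : SimpleGraph V} (a b : V) {x y : V} (p : G.Walk x y) :
    (G \ fromEdgeSet {s(a,b)}).Reachable x y ∨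
    (((G \ fromEdgeSet {s(a,b)}).Reachable x a ∨ (G \ fromEdgeSet {s(a,b)}).Reachable x b) ∧
     ((G \ fromEdgeSet {s(a,b)}).Reachable y a ∨ (G \ fromEdgeSet {s(a,b)}).Reachable y b)) := by
  induction p with
  | nil => exact Or.inl (Reachable.refl _)
  | @cons u v y' h q ih =>
    by_cases hc : s(u, v) = s(a, b)
    · rw [Sym2.eq_iff] at hc
      right
      constructor
      · rcases hc with ⟨rfl, rfl⟩ | ⟨rfl, rfl⟩
        · exact Or.inl (Reachable.refl _)
        · exact Or.inr (Reachable.refl _)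
      · rcases ih with hr | ⟨_, hy⟩
        · rcases hc with ⟨_, rfl⟩ | ⟨_, rfl⟩
          · exact Or.inr hr.symm
          · exact Or.inl hr.symm
        · exact hy
    · have hadj : (G \ fromEdgeSet {s(a,b)}).Adj u v := by
        rw [sdiff_adj]
        refine ⟨h, ?_⟩
        rw [fromEdgeSet_adj]
        rintro ⟨h1, -⟩
        exact hc h1
      rcases ih with hr | ⟨hv', hy⟩
      · exact Or.inl (hadj.reachable.trans hr)
      · exact Or.inr ⟨hv'.imp (fun h' => hadj.reachable.trans h')
          (fun h' => hadj.reachable.trans h'), hy⟩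

lemma acyclic_anti {G H : SimpleGraph V} (hle : H ≤ G) (hG : G.IsAcyclic) : H.IsAcyclic :=
  fun _ c hc => hG _ (hc.mapLe hle)

lemma acyclic_add {G : SimpleGraph V} (hG : G.IsAcyclic) {p q : V} (hpq : p ≠ q)
    (hnr : ¬ G.Reachable p q) : (G ⊔ fromEdgeSet {s(p,q)}).IsAcyclic := by
  have hGpq : ¬ G.Adj p q := fun h => hnr h.reachable
  rw [isAcyclic_iff_forall_adj_isBridge]
  intro v w hvw
  rw [isBridge_iff]
  rw [sup_adj] at hvw
  rcases hvw with hvw | hvw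
  · -- old edge
    have hne : s(v, w) ≠ s(p, q) := by
      intro h
      rw [Sym2.eq_iff] at h
      rcases h with ⟨rfl, rfl⟩ | ⟨rfl, rfl⟩
      · exact hGpq hvw
      · exact hGpq hvw.symm
    have hbr : ¬ (G \ fromEdgeSet {s(v, w)}).Reachable v w :=
      ((isAcyclic_iff_forall_adj_isBridge.mp hG) hvw)
    have hgeq : (G ⊔ fromEdgeSet {s(p,q)}) \ fromEdgeSet {s(v,w)} =
        (G \ fromEdgeSet {s(v,w)}) ⊔ fromEdgeSet {s(p,q)} := by
      ext u u'
      simp only [sdiff_adj, sup_adj, fromEdgeSet_adj, Set.mem_singleton_iff]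
      constructor
      · rintro ⟨hu | ⟨he, hne'⟩, h2⟩
        · exact Or.inl ⟨hu, h2⟩
        · exact Or.inr ⟨he, hne'⟩
      · rintro (⟨hu, h2⟩ | ⟨he, hne'⟩)
        · exact ⟨Or.inl hu, h2⟩
        · refine ⟨Or.inr ⟨he, hne'⟩, ?_⟩
          rintro ⟨h3, -⟩
          rw [he] at h3
          exact hne h3.symm
    rw [deleteEdges, hgeq]
    rintro ⟨pw⟩
    have heq2 : ((G \ fromEdgeSet {s(v,w)}) ⊔ fromEdgeSet {s(p,q)}) \ fromEdgeSet {s(p,q)} =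
        G \ fromEdgeSet {s(v,w)} := by
      ext u u'
      simp only [sdiff_adj, sup_adj, fromEdgeSet_adj, Set.mem_singleton_iff]
      constructor
      · rintro ⟨⟨hu, h2⟩ | ⟨he, hne'⟩, h3⟩
        · exact ⟨hu, h2⟩
        · exact absurd ⟨he, hne'⟩ h3
      · rintro ⟨hu, h2⟩
        refine ⟨Or.inl ⟨hu, h2⟩, ?_⟩
        rintro ⟨h3, hne'⟩
        apply hnr
        rw [Sym2.eq_iff] at h3
        rcases h3 with ⟨rfl, rfl⟩ | ⟨rfl, rfl⟩
        · exact hu.reachable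
        · exact hu.reachable.symm
    have := walk_or p q pw
    rw [heq2] at this
    rcases this with hr | ⟨hv', hw'⟩
    · exact hbr hr
    · have hmono : (G \ fromEdgeSet {s(v,w)}) ≤ G := sdiff_le
      rcases hv' with h1 | h1 <;> rcases hw' with h2 | h2
      · exact hbr (h1.trans h2.symm)
      · exact hnr (((h1.mono hmono).symm.trans hvw.reachable).trans (h2.mono hmono))
      · exact hnr (((h2.mono hmono).symm.trans hvw.reachable.symm).trans (h1.mono hmono))
      · exact hbr (h1.trans h2.symm)
  · -- new edge
    rw [fromEdgeSet_adj, Set.mem_singleton_iff] at hvw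
    obtain ⟨hvweq, hvwne⟩ := hvw
    have heq : (G ⊔ fromEdgeSet {s(p,q)}) \ fromEdgeSet {s(v,w)} = G := by
      rw [hvweq]
      ext u u'
      simp only [sdiff_adj, sup_adj, fromEdgeSet_adj, Set.mem_singleton_iff]
      constructor
      · rintro ⟨hu | ⟨he, hne'⟩, h2⟩
        · exact hu
        · exact absurd ⟨he, hne'⟩ h2
      · intro hu
        refine ⟨Or.inl hu, ?_⟩
        rintro ⟨h3, -⟩
        apply hnr
        rw [Sym2.eq_iff] at h3
        rcases h3 with ⟨rfl, rfl⟩ | ⟨rfl, rfl⟩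
        · exact hu.reachable
        · exact hu.reachable.symm
    rw [deleteEdges, heq]
    intro hr
    apply hnr
    rw [Sym2.eq_iff] at hvweq
    rcases hvweq with ⟨rfl, rfl⟩ | ⟨rfl, rfl⟩
    · exact hr
    · exact hr.symm

lemma fe_erase [DecidableEq V] (E : Finset (Sym2 V)) (e : Sym2 V) :
    fromEdgeSet ((E.erase e : Finset (Sym2 V)) : Set (Sym2 V)) =
      fromEdgeSet (E : Set (Sym2 V)) \ fromEdgeSet {e} := by
  ext u v
  simp only [fromEdgeSet_adj, sdiff_adj, Finset.coe_erase, Set.mem_diff,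
    Set.mem_singleton_iff, Finset.mem_coe]
  tauto

lemma fe_insert [DecidableEq V] (s : Finset (Sym2 V)) (e : Sym2 V) :
    fromEdgeSet ((insert e s : Finset (Sym2 V)) : Set (Sym2 V)) =
      fromEdgeSet (s : Set (Sym2 V)) ⊔ fromEdgeSet {e} := by
  ext u v
  simp only [fromEdgeSet_adj, sup_adj, Finset.coe_insert, Set.mem_insert_iff,
    Set.mem_singleton_iff, Finset.mem_coe]
  tauto

end Graph
section Core

open SimpleGraph

lemma wNmetric_comm {V : Type*} [DecidableEq V] (d : ℕ) (φ : V → List Bool) (u v : V) :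
    wNmetric d φ u v = wNmetric d φ v u := by
  unfold wNmetric
  rcases eq_or_ne u v with rfl | h
  · rfl
  · rw [if_neg h, if_neg (Ne.symm h), wNnode_comm]

lemma edgeW_mk {V : Type*} (w : V → V → ℝ) (hs : ∀ u v, w u v = w v u) (u v : V) :
    edgeW w s(u, v) = w u v := by
  unfold edgeW
  rw [Sym2.lift_mk]
  simp only
  rw [hs v u]
  ring

lemma core {V : Type*} [Fintype V] [DecidableEq V] (d : ℕ)
    (φ : V → List Bool)
    (hsurj : ∀ l : List Bool, l.length ≤ d → ∃ v, φ v = l)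
    (T : Finset V) (hT : T = Finset.univ.filter (fun v => (φ v).length = d))
    (w : V → V → ℝ) (hw : ∀ v v', w v v' = (wNmetric d φ v v' : ℝ))
    (E : Finset (Sym2 V))
    (hdiag : ∀ e ∈ E, ¬ e.IsDiag)
    (hacyc : (fromEdgeSet (E : Set (Sym2 V))).IsAcyclic)
    (hconn : Connects E T)
    (hopt : ∀ E' : Finset (Sym2 V), IsSteinerTree E' T → treeCost w E ≤ treeCost w E')
    (a b : V) (hab : a ≠ b) (he : s(a, b) ∈ E)
    (hla : (φ a).length < d) (hlb : (φ b).length < d)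
    (hba : (φ b).length ≤ (φ a).length) : False := by
  have wsymm : ∀ u v, w u v = w v u := by
    intro u v; rw [hw, hw, wNmetric_comm]
  set G := fromEdgeSet (E : Set (Sym2 V)) with hGdef
  obtain ⟨v₀, hv₀⟩ := hsurj (φ a ++ List.replicate (d - (φ a).length) false)
    (by simp; omega)
  have hv₀d : (φ v₀).length = d := by rw [hv₀]; simp; omega
  have hv₀T : v₀ ∈ T := by rw [hT]; simp [hv₀d]
  have hv₀a : v₀ ≠ a := by intro h; rw [h] at hv₀d; omega
  have hv₀b : v₀ ≠ b := by intro h; rw [h] at hv₀d; omega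
  obtain ⟨hsum, hpos1, hpos2⟩ := wN_key d (φ a) (φ b) hla hlb hba
  rw [← hv₀] at hsum hpos1 hpos2
  have hlta : wNnode d (φ v₀) (φ a) < wNnode d (φ a) (φ b) := by
    rw [hsum]; exact Nat.lt_add_of_pos_right hpos2
  have hltb : wNnode d (φ v₀) (φ b) < wNnode d (φ a) (φ b) := by
    rw [hsum]; exact Nat.lt_add_of_pos_left hpos1
  have wab : w a b = (wNnode d (φ a) (φ b) : ℝ) := by
    rw [hw]; unfold wNmetric; rw [if_neg hab]
  have wva : w v₀ a = (wNnode d (φ v₀) (φ a) : ℝ) := by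
    rw [hw]; unfold wNmetric; rw [if_neg hv₀a]
  have wvb : w v₀ b = (wNnode d (φ v₀) (φ b) : ℝ) := by
    rw [hw]; unfold wNmetric; rw [if_neg hv₀b]
  have hGadj : G.Adj a b := (fromEdgeSet_adj _).mpr ⟨he, hab⟩
  have hbridge : ¬ (G \ fromEdgeSet {s(a, b)}).Reachable a b :=
    ((isAcyclic_iff_forall_adj_isBridge.mp hacyc) hGadj)
  set H := G \ fromEdgeSet {s(a, b)} with hHdef
  have hHle : H ≤ G := sdiff_le
  have terminalSide : ∀ t : V, G.Reachable t a → (H.Reachable t a ∨ H.Reachable t b) := by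
    intro t htr
    obtain ⟨p⟩ := htr
    rcases walk_or a b p with hr | ⟨hside, -⟩
    · exact Or.inl hr
    · exact hside
  have cost_ins : ∀ f : Sym2 V, f ∉ E.erase s(a, b) →
      treeCost w (insert f (E.erase s(a, b))) = treeCost w E - edgeW w s(a, b) + edgeW w f := by
    intro f hf
    unfold treeCost
    rw [Finset.sum_insert hf, Finset.sum_erase_eq_sub he]
    ring
  have ew_ab : edgeW w s(a, b) = w a b := edgeW_mk w wsymm a b
  by_cases hreachG : G.Reachable v₀ a
  · by_cases hHa : H.Reachable v₀ a
    · -- new edge (v₀, b)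
      set E' := insert s(v₀, b) (E.erase s(a, b)) with hE'
      have hnotin : s(v₀, b) ∉ E.erase s(a, b) := by
        intro hmem
        have hadj : (fromEdgeSet ((E.erase s(a, b) : Finset (Sym2 V)) : Set (Sym2 V))).Adj v₀ b :=
          (fromEdgeSet_adj _).mpr ⟨Finset.mem_coe.mpr hmem, hv₀b⟩
        rw [fe_erase] at hadj
        exact hbridge (hHa.symm.trans hadj.reachable)
      have hG' : fromEdgeSet ((E' : Finset (Sym2 V)) : Set (Sym2 V)) =
          H ⊔ fromEdgeSet {s(v₀, b)} := by
        rw [hE', fe_insert, fe_erase, hHdef, hGdef]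
      have hHnr : ¬ H.Reachable v₀ b := fun h => hbridge (hHa.symm.trans h)
      have hsteiner : IsSteinerTree E' T := by
        refine ⟨?_, ?_, ?_⟩
        · intro f hf
          rcases Finset.mem_insert.mp hf with rfl | hf'
          · rw [Sym2.mk_isDiag_iff]; exact hv₀b
          · exact hdiag f (Finset.mem_of_mem_erase hf')
        · rw [hG']
          exact acyclic_add (acyclic_anti hHle hacyc) hv₀b hHnr
        · intro t ht t' ht'
          rw [hG']
          have key : ∀ s : V, s ∈ T → (H ⊔ fromEdgeSet {s(v₀, b)}).Reachable s a := by
            intro s hs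
            have h1 : G.Reachable s a := (hconn s hs v₀ hv₀T).trans hreachG
            have hbv : (H ⊔ fromEdgeSet {s(v₀, b)}).Reachable b a := by
              have hadj : (H ⊔ fromEdgeSet {s(v₀, b)}).Adj v₀ b :=
                sup_adj _ _ _ _ |>.mpr (Or.inr ((fromEdgeSet_adj _).mpr ⟨rfl, hv₀b⟩))
              exact hadj.reachable.symm.trans (hHa.mono le_sup_left)
            rcases terminalSide s h1 with h2 | h2
            · exact h2.mono le_sup_left
            · exact (h2.mono le_sup_left).trans hbv
          exact (key t ht).trans (key t' ht').symm
      have hcost := hopt E' hsteiner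
      rw [hE', cost_ins _ hnotin, ew_ab, edgeW_mk w wsymm v₀ b] at hcost
      have hlt : w v₀ b < w a b := by rw [wab, wvb]; exact_mod_cast hltb
      linarith
    · -- v₀ reaches b in H; new edge (v₀, a)
      have hvb : H.Reachable v₀ b := by
        obtain ⟨p⟩ := hreachG
        rcases walk_or a b p with hr | ⟨hside, -⟩
        · exact absurd hr hHa
        · rcases hside with h | h
          · exact absurd h hHa
          · exact h
      set E' := insert s(v₀, a) (E.erase s(a, b)) with hE'
      have hnotin : s(v₀, a) ∉ E.erase s(a, b) := by
        intro hmem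
        have hadj : (fromEdgeSet ((E.erase s(a, b) : Finset (Sym2 V)) : Set (Sym2 V))).Adj v₀ a :=
          (fromEdgeSet_adj _).mpr ⟨Finset.mem_coe.mpr hmem, hv₀a⟩
        rw [fe_erase] at hadj
        exact hHa hadj.reachable
      have hG' : fromEdgeSet ((E' : Finset (Sym2 V)) : Set (Sym2 V)) =
          H ⊔ fromEdgeSet {s(v₀, a)} := by
        rw [hE', fe_insert, fe_erase, hHdef, hGdef]
      have hsteiner : IsSteinerTree E' T := by
        refine ⟨?_, ?_, ?_⟩
        · intro f hf
          rcases Finset.mem_insert.mp hf with rfl | hf'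
          · rw [Sym2.mk_isDiag_iff]; exact hv₀a
          · exact hdiag f (Finset.mem_of_mem_erase hf')
        · rw [hG']
          exact acyclic_add (acyclic_anti hHle hacyc) hv₀a hHa
        · intro t ht t' ht'
          rw [hG']
          have key : ∀ s : V, s ∈ T → (H ⊔ fromEdgeSet {s(v₀, a)}).Reachable s b := by
            intro s hs
            have h1 : G.Reachable s a := (hconn s hs v₀ hv₀T).trans hreachG
            have hav : (H ⊔ fromEdgeSet {s(v₀, a)}).Reachable a b := by
              have hadj : (H ⊔ fromEdgeSet {s(v₀, a)}).Adj v₀ a :=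
                sup_adj _ _ _ _ |>.mpr (Or.inr ((fromEdgeSet_adj _).mpr ⟨rfl, hv₀a⟩))
              exact hadj.reachable.symm.trans (hvb.mono le_sup_left)
            rcases terminalSide s h1 with h2 | h2
            · exact (h2.mono le_sup_left).trans hav
            · exact h2.mono le_sup_left
          exact (key t ht).trans (key t' ht').symm
      have hcost := hopt E' hsteiner
      rw [hE', cost_ins _ hnotin, ew_ab, edgeW_mk w wsymm v₀ a] at hcost
      have hlt : w v₀ a < w a b := by rw [wab, wva]; exact_mod_cast hlta
      linarith
  · -- delete the edge
    set E' := E.erase s(a, b) with hE'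
    have hsteiner : IsSteinerTree E' T := by
      refine ⟨?_, ?_, ?_⟩
      · intro f hf
        exact hdiag f (Finset.mem_of_mem_erase hf)
      · rw [hE', fe_erase]
        exact acyclic_anti sdiff_le hacyc
      · intro t ht t' ht'
        rw [hE', fe_erase]
        obtain ⟨p⟩ := hconn t ht t' ht'
        rcases walk_or a b p with hr | ⟨hside, -⟩
        · exact hr
        · exfalso
          apply hreachG
          have hta : G.Reachable t a := by
            rcases hside with h | h
            · exact h.mono hHle
            · exact (h.mono hHle).trans hGadj.reachable.symm
          exact ((hconn v₀ hv₀T t ht).trans hta)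
    have hcost := hopt E' hsteiner
    have hcost2 : treeCost w E' = treeCost w E - edgeW w s(a, b) := by
      rw [hE']
      unfold treeCost
      rw [Finset.sum_erase_eq_sub he]
    have hpos : (0 : ℝ) < edgeW w s(a, b) := by
      rw [ew_ab, wab]
      have : 0 < wNnode d (φ a) (φ b) := by omega
      exact_mod_cast this
    rw [hcost2] at hcost
    linarith

end Core
open Classical in
theorem stmt15 {V : Type*} [Fintype V] [DecidableEq V] (d : ℕ) (hd : 1 ≤ d)
    (φ : V → List Bool) (hinj : Function.Injective φ)
    (hlen : ∀ v, (φ v).length ≤ d)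
    (hsurj : ∀ l : List Bool, l.length ≤ d → ∃ v, φ v = l)
    (T : Finset V) (hT : T = Finset.univ.filter (fun v => (φ v).length = d))
    (w : V → V → ℝ) (hw : ∀ v v', w v v' = (wNmetric d φ v v' : ℝ))
    (E : Finset (Sym2 V)) (hE : IsSteinerTree E T)
    (hopt : ∀ E' : Finset (Sym2 V), IsSteinerTree E' T → treeCost w E ≤ treeCost w E') :
    ∀ e ∈ E, ∃ v, v ∈ e ∧ v ∈ T := by
  obtain ⟨hdiag, hacyc, hconn⟩ := hE
  intro e he
  by_contra hcon
  push_neg at hcon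
  revert he hcon
  induction e using Sym2.ind with
  | _ a b =>
    intro he hcon
    have hab : a ≠ b := fun h => hdiag _ he (Sym2.mk_isDiag_iff.mpr h)
    have haT : a ∉ T := hcon a (Sym2.mem_mk_left a b)
    have hbT : b ∉ T := hcon b (Sym2.mem_mk_right a b)
    have hla : (φ a).length < d :=
      lt_of_le_of_ne (hlen a) (fun h => haT (by rw [hT]; simp [h]))
    have hlb : (φ b).length < d :=
      lt_of_le_of_ne (hlen b) (fun h => hbT (by rw [hT]; simp [h]))
    rcases le_total (φ b).length (φ a).length with hba | hba
    · exact core d φ hsurj T hT w hw E hdiag hacyc hconn hopt a b hab he hla hlb hba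
    · exact core d φ hsurj T hT w hw E hdiag hacyc hconn hopt b a (Ne.symm hab)
        (by rwa [Sym2.eq_swap]) hlb hla hba
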